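/- arXiv:math-ph/0702050 — 8 statements merged into one kernel-verified Lean document; each statement's English description precedes it below -/
import Mathlib

section
/- Let Φ = (a; b) be a 2L×L complex matrix of rank L satisfying the Lagrangian condition Φ*JΦ = 0, where J = ((0, -1),(1, 0)) is the standard symplectic form. Then the L×L matrices a + ib and a - ib both have rank L (i.e., are invertible). -/
open Matrix

noncomputable section

/-- The standard symplectic form `J = ((0,-1),(1,0))` in `L × L` blocks. -/
def Jmat (L : ℕ) : Matrix (Fin L ⊕ Fin L) (Fin L ⊕ Fin L) ℂ :=
  Matrix.fromBlocks 0 (-1) 1 0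

lemma aux_isUnit_of_rank_eq (L : ℕ) (C : Matrix (Fin L) (Fin L) ℂ) (h : C.rank = L) :
    IsUnit C := by
  have htop : LinearMap.range C.mulVecLin = ⊤ := by
    apply Submodule.eq_top_of_finrank_eq
    rw [show Module.finrank ℂ (LinearMap.range C.mulVecLin) = C.rank from rfl]
    simp [h, Module.finrank_fintype_fun_eq_card]
  rw [← Matrix.mulVec_surjective_iff_isUnit]
  intro y
  obtain ⟨x, hx⟩ := LinearMap.range_eq_top.mp htop y
  exact ⟨x, by simpa using hx⟩

open scoped ComplexOrder in
lemma aux_rank_conj {m : Type*} [Fintype m] (L : ℕ) (A : Matrix m (Fin L) ℂ) (h : A.rank = L) :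
    IsUnit (Aᴴ * A) := by
  apply aux_isUnit_of_rank_eq
  rw [Matrix.rank_conjTranspose_mul_self, h]

/-- If `Φ = (a; b)` has rank `L` and satisfies the Lagrangian condition `Φ* J Φ = 0`,
then `a + i b` and `a - i b` are invertible. -/
theorem stmt0 (L : ℕ) (a b : Matrix (Fin L) (Fin L) ℂ)
    (hrank : (Matrix.fromRows a b).rank = L)
    (hLag : (Matrix.fromRows a b)ᴴ * Jmat L * Matrix.fromRows a b = 0) :
    IsUnit (a + Complex.I • b) ∧ IsUnit (a - Complex.I • b) := by
  have hcomm : bᴴ * a - aᴴ * b = 0 := by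
    have := hLag
    rw [Jmat, conjTranspose_fromRows_eq_fromCols_conjTranspose,
      fromCols_mul_fromBlocks, fromCols_mul_fromRows] at this
    simpa [mul_comm, sub_eq_add_neg] using this
  have hC : IsUnit (aᴴ * a + bᴴ * b) := by
    have h2 : (Matrix.fromRows a b)ᴴ * Matrix.fromRows a b = aᴴ * a + bᴴ * b := by
      rw [conjTranspose_fromRows_eq_fromCols_conjTranspose, fromCols_mul_fromRows]
    rw [← h2]
    exact aux_rank_conj L (Matrix.fromRows a b) hrank
  have hCd : IsUnit (aᴴ * a + bᴴ * b).det := (Matrix.isUnit_iff_isUnit_det _).mp hC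
  have key : ∀ (M : Matrix (Fin L) (Fin L) ℂ), Mᴴ * M = aᴴ * a + bᴴ * b → IsUnit M := by
    intro M hM
    rw [Matrix.isUnit_iff_isUnit_det]
    have : Mᴴ.det * M.det = (aᴴ * a + bᴴ * b).det := by rw [← Matrix.det_mul, hM]
    exact isUnit_of_mul_isUnit_right (this ▸ hCd)
  have hsub : bᴴ * a = aᴴ * b := by linear_combination (norm := noncomm_ring) hcomm
  constructor
  · apply key
    simp only [conjTranspose_add, conjTranspose_smul, Complex.star_def, Complex.conj_I,
      Matrix.add_mul, Matrix.mul_add, Matrix.smul_mul, Matrix.mul_smul, smul_smul, neg_mul, Complex.I_mul_I, neg_neg, hsub]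
    match_scalars <;> simp [Complex.I_sq]
  · apply key
    simp only [conjTranspose_sub, conjTranspose_smul, Complex.star_def, Complex.conj_I,
      Matrix.sub_mul, Matrix.mul_sub, Matrix.smul_mul, Matrix.mul_smul, smul_smul, neg_mul, Complex.I_mul_I, neg_neg, hsub]
    match_scalars <;> simp [Complex.I_sq]
end
end

section
/- Let T = ((A,B),(C,D)) ∈ U(L,L) (i.e., T*GT = G with G = diag(1,-1) in L×L blocks) and let U be an L×L matrix with U*U ≤ 1. Then CU + D is invertible, and the identity (CU+D)*(CU+D) - (AU+B)*(AU+B) = 1 - U*U holds. Consequently the Möbius transform T·U = (AU+B)(CU+D)^{-1} satisfies (T·U)*(T·U) ≤ 1, and if U*U = 1 (U unitary) then T·U is unitary. -/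
open Matrix
open scoped ComplexOrder

noncomputable section

def Gmat (L : ℕ) : Matrix (Fin L ⊕ Fin L) (Fin L ⊕ Fin L) ℂ :=
  Matrix.fromBlocks 1 0 0 (-1)

/-- For `T = ((A,B),(C,D)) ∈ U(L,L)` and `U` with `U*U ≤ 1`: `CU + D` is invertible,
the crucial identity `(CU+D)*(CU+D) - (AU+B)*(AU+B) = 1 - U*U` holds, the Möbius
transform `T·U = (AU+B)(CU+D)⁻¹` satisfies `(T·U)*(T·U) ≤ 1`, and if `U` is unitary
then so is `T·U`. -/
theorem stmt8 (L : ℕ) (A B C D U : Matrix (Fin L) (Fin L) ℂ)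
    (hT : (Matrix.fromBlocks A B C D)ᴴ * Gmat L * Matrix.fromBlocks A B C D = Gmat L)
    (hU : (1 - Uᴴ * U).PosSemidef) :
    IsUnit (C * U + D) ∧
    (C * U + D)ᴴ * (C * U + D) - (A * U + B)ᴴ * (A * U + B) = 1 - Uᴴ * U ∧
    (1 - ((A * U + B) * (C * U + D)⁻¹)ᴴ * ((A * U + B) * (C * U + D)⁻¹)).PosSemidef ∧
    (Uᴴ * U = 1 → (A * U + B) * (C * U + D)⁻¹ ∈ Matrix.unitaryGroup (Fin L) ℂ) := by
  -- T is invertible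
  have hG : Gmat L * Gmat L = 1 := by
    simp [Gmat, Matrix.fromBlocks_multiply, ← Matrix.fromBlocks_one]
  have hTleft : (Gmat L * (Matrix.fromBlocks A B C D)ᴴ * Gmat L) *
      Matrix.fromBlocks A B C D = 1 := by
    calc (Gmat L * (Matrix.fromBlocks A B C D)ᴴ * Gmat L) * Matrix.fromBlocks A B C D
        = Gmat L * ((Matrix.fromBlocks A B C D)ᴴ * Gmat L * Matrix.fromBlocks A B C D) := by
          noncomm_ring
      _ = 1 := by rw [hT, hG]
  have hTunit : IsUnit (Matrix.fromBlocks A B C D).det := by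
    have hd := congrArg Matrix.det hTleft
    rw [Matrix.det_mul, Matrix.det_one] at hd
    exact IsUnit.of_mul_eq_one _ ((mul_comm _ _).trans hd)
  -- block relations
  rw [Gmat, Matrix.fromBlocks_conjTranspose, Matrix.fromBlocks_multiply,
    Matrix.fromBlocks_multiply] at hT
  simp only [Matrix.mul_one, Matrix.mul_zero, Matrix.zero_mul, Matrix.one_mul, Matrix.mul_neg,
    Matrix.neg_mul, add_zero, zero_add, Matrix.mul_one, mul_neg_one] at hT
  rw [Matrix.fromBlocks_inj] at hT
  obtain ⟨h1, h2, h3, h4⟩ := hT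
  have e1 : Aᴴ * A = 1 + Cᴴ * C := by linear_combination (norm := noncomm_ring) h1
  have e2 : Aᴴ * B = Cᴴ * D := by linear_combination (norm := noncomm_ring) h2
  have e3 : Bᴴ * A = Dᴴ * C := by linear_combination (norm := noncomm_ring) h3
  have e4 : Dᴴ * D = 1 + Bᴴ * B := by linear_combination (norm := noncomm_ring) -h4
  -- key identity
  have key : (C * U + D)ᴴ * (C * U + D) - (A * U + B)ᴴ * (A * U + B) = 1 - Uᴴ * U := by
    simp only [Matrix.conjTranspose_add, Matrix.conjTranspose_mul]
    calc (Uᴴ * Cᴴ + Dᴴ) * (C * U + D) - (Uᴴ * Aᴴ + Bᴴ) * (A * U + B)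
        = Uᴴ * (Cᴴ * C) * U + Uᴴ * (Cᴴ * D) + (Dᴴ * C) * U + Dᴴ * D
          - (Uᴴ * (Aᴴ * A) * U + Uᴴ * (Aᴴ * B) + (Bᴴ * A) * U + Bᴴ * B) := by noncomm_ring
      _ = 1 - Uᴴ * U := by rw [e1, e2, e3, e4]; noncomm_ring
  -- invertibility of C*U+D
  have hdet : (C * U + D).det ≠ 0 := by
    intro hdet0
    obtain ⟨v, hv0, hv⟩ := Matrix.exists_mulVec_eq_zero_iff.mpr hdet0
    have hquad : star v ⬝ᵥ ((1 - Uᴴ * U).mulVec v)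
        + star ((A * U + B).mulVec v) ⬝ᵥ ((A * U + B).mulVec v) = 0 := by
      have : star v ⬝ᵥ (((C * U + D)ᴴ * (C * U + D)).mulVec v) = 0 := by
        rw [← Matrix.mulVec_mulVec, hv, Matrix.mulVec_zero, dotProduct_zero]
      have conj : ∀ (M : Matrix (Fin L) (Fin L) ℂ) (w : Fin L → ℂ),
          star w ⬝ᵥ ((Mᴴ * M).mulVec w) = star (M.mulVec w) ⬝ᵥ (M.mulVec w) := by
        intro M w
        rw [← Matrix.mulVec_mulVec, Matrix.dotProduct_mulVec, ← Matrix.star_mulVec]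
      have hsum : (C * U + D)ᴴ * (C * U + D)
          = (1 - Uᴴ * U) + (A * U + B)ᴴ * (A * U + B) := by
        linear_combination (norm := noncomm_ring) key
      calc star v ⬝ᵥ ((1 - Uᴴ * U).mulVec v)
            + star ((A * U + B).mulVec v) ⬝ᵥ ((A * U + B).mulVec v)
          = star v ⬝ᵥ ((1 - Uᴴ * U).mulVec v)
            + star v ⬝ᵥ (((A * U + B)ᴴ * (A * U + B)).mulVec v) := by rw [conj]
        _ = star v ⬝ᵥ ((((1 - Uᴴ * U) + (A * U + B)ᴴ * (A * U + B))).mulVec v) := by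
            rw [Matrix.add_mulVec, dotProduct_add]
        _ = 0 := by rw [← hsum]; exact this
    have hnn1 : 0 ≤ star v ⬝ᵥ ((1 - Uᴴ * U).mulVec v) := hU.dotProduct_mulVec_nonneg v
    have hnn2 : 0 ≤ star ((A * U + B).mulVec v) ⬝ᵥ ((A * U + B).mulVec v) :=
      dotProduct_star_self_nonneg _
    have hz := (add_eq_zero_iff_of_nonneg hnn1 hnn2).mp hquad
    have hAB : (A * U + B).mulVec v = 0 :=
      dotProduct_star_self_eq_zero.mp hz.2
    -- T kills (Uv, v)
    have hker : (Matrix.fromBlocks A B C D).mulVec (Sum.elim (U.mulVec v) v) = 0 := by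
      rw [Matrix.fromBlocks_mulVec]
      have hl : Sum.elim (U.mulVec v) v ∘ Sum.inl = U.mulVec v := rfl
      have hr : Sum.elim (U.mulVec v) v ∘ Sum.inr = v := rfl
      rw [hl, hr, Matrix.mulVec_mulVec, Matrix.mulVec_mulVec,
        ← Matrix.add_mulVec, ← Matrix.add_mulVec, hAB, hv]
      simp
    have hTdet : (Matrix.fromBlocks A B C D).det ≠ 0 := by
      simpa [isUnit_iff_ne_zero] using hTunit
    have : Sum.elim (U.mulVec v) v = 0 := by
      by_contra hne
      exact hTdet (Matrix.exists_mulVec_eq_zero_iff.mp ⟨_, hne, hker⟩)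
    exact hv0 (funext fun i => congrFun this (Sum.inr i))
  have hVunit : IsUnit (C * U + D) :=
    (Matrix.isUnit_iff_isUnit_det _).mpr (isUnit_iff_ne_zero.mpr hdet)
  set V := C * U + D with hVdef
  have hVinv : V * V⁻¹ = 1 := Matrix.mul_nonsing_inv _ (isUnit_iff_ne_zero.mpr hdet)
  -- psd identity
  have main : 1 - ((A * U + B) * V⁻¹)ᴴ * ((A * U + B) * V⁻¹)
      = (V⁻¹)ᴴ * (1 - Uᴴ * U) * V⁻¹ := by
    rw [← key]
    calc 1 - ((A * U + B) * V⁻¹)ᴴ * ((A * U + B) * V⁻¹)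
        = (V * V⁻¹)ᴴ * (V * V⁻¹)
          - (V⁻¹)ᴴ * ((A * U + B)ᴴ * (A * U + B)) * V⁻¹ := by
          rw [hVinv]; simp [Matrix.conjTranspose_mul]; noncomm_ring
      _ = (V⁻¹)ᴴ * (Vᴴ * V - (A * U + B)ᴴ * (A * U + B)) * V⁻¹ := by
          simp only [Matrix.conjTranspose_mul]; noncomm_ring
  refine ⟨hVunit, key, ?_, ?_⟩
  · rw [main]; exact hU.conjTranspose_mul_mul_same _
  · intro hUU
    have : (1 : Matrix (Fin L) (Fin L) ℂ) - Uᴴ * U = 0 := by rw [hUU]; simp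
    have h0 : 1 - ((A * U + B) * V⁻¹)ᴴ * ((A * U + B) * V⁻¹) = 0 := by
      rw [main, this]; simp
    rw [Matrix.mem_unitaryGroup_iff', Matrix.star_eq_conjTranspose]
    linear_combination (norm := noncomm_ring) -h0
end
end

section
/- Let T = ((A,B),(C,D)) ∈ U(L,L) and let U be a matrix with U*U ≤ 1 such that rank(1 - U*U) = L - l. Then the Möbius transform T·U = (AU+B)(CU+D)^{-1} also satisfies rank(1 - (T·U)*(T·U)) = L - l. In other words, the Möbius action of U(L,L) preserves each stratum of the boundary of the matrix unit disc. -/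
open Matrix
open scoped ComplexOrder

noncomputable section

/-- The Möbius action of `U(L,L)` preserves the strata of the boundary of the matrix
unit disc: if `rank(1 - U*U) = L - l` then the same holds for `T·U = (AU+B)(CU+D)⁻¹`. -/
theorem stmt9 (L l : ℕ) (A B C D U : Matrix (Fin L) (Fin L) ℂ)
    (hT : (Matrix.fromBlocks A B C D)ᴴ * Gmat L * Matrix.fromBlocks A B C D = Gmat L)
    (hU : (1 - Uᴴ * U).PosSemidef)
    (hrank : (1 - Uᴴ * U).rank = L - l) :
    (1 - ((A * U + B) * (C * U + D)⁻¹)ᴴ * ((A * U + B) * (C * U + D)⁻¹)).rank = L - l := by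
  set T := Matrix.fromBlocks A B C D with hTdef
  -- block form of the unitarity condition
  have hblocks : Matrix.fromBlocks (Aᴴ*A - Cᴴ*C) (Aᴴ*B - Cᴴ*D) (Bᴴ*A - Dᴴ*C) (Bᴴ*B - Dᴴ*D)
      = Gmat L := by
    rw [← hT]
    simp [hTdef, Gmat, Matrix.fromBlocks_conjTranspose, Matrix.fromBlocks_multiply,
      Matrix.mul_assoc, sub_eq_add_neg, Matrix.mul_neg]
  have h11 : Aᴴ*A - Cᴴ*C = 1 := by
    have := congrArg Matrix.toBlocks₁₁ hblocks; simpa [Gmat] using this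
  have h12 : Aᴴ*B - Cᴴ*D = 0 := by
    have := congrArg Matrix.toBlocks₁₂ hblocks; simpa [Gmat] using this
  have h21 : Bᴴ*A - Dᴴ*C = 0 := by
    have := congrArg Matrix.toBlocks₂₁ hblocks; simpa [Gmat] using this
  have h22 : Bᴴ*B - Dᴴ*D = -1 := by
    have := congrArg Matrix.toBlocks₂₂ hblocks; simpa [Gmat] using this
  set M := C * U + D with hMdef
  set P := A * U + B with hPdef
  -- key identity
  have hkey : Mᴴ * M = Pᴴ * P + (1 - Uᴴ * U) := by
    have expand : Mᴴ * M - Pᴴ * P =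
        -(Uᴴ*(Aᴴ*A - Cᴴ*C)*U) - Uᴴ*(Aᴴ*B - Cᴴ*D) - (Bᴴ*A - Dᴴ*C)*U - (Bᴴ*B - Dᴴ*D) := by
      simp only [hMdef, hPdef, conjTranspose_add, conjTranspose_mul]
      noncomm_ring
    have : Mᴴ * M - Pᴴ * P = 1 - Uᴴ * U := by
      rw [expand, h11, h12, h21, h22]; noncomm_ring
    linear_combination (norm := noncomm_ring) this
  -- T has nonzero determinant
  have hdetT : IsUnit T.det := by
    have hG : (Gmat L).det ≠ 0 := by
      simp [Gmat, Matrix.det_fromBlocks_zero₂₁, Matrix.det_neg]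
    have := congrArg Matrix.det hT
    rw [Matrix.det_mul, Matrix.det_mul, Matrix.det_conjTranspose] at this
    refine isUnit_iff_ne_zero.mpr fun h => hG ?_
    rw [← this, h, mul_zero]
  -- M is invertible
  have hdetM : IsUnit M.det := by
    rw [isUnit_iff_ne_zero]
    intro hdet
    obtain ⟨v, hv0, hv⟩ := (Matrix.exists_mulVec_eq_zero_iff).mpr hdet
    -- star v ⬝ (MᴴM) v = 0
    have h0 : star v ⬝ᵥ ((Mᴴ * M) *ᵥ v) = 0 := by
      rw [← Matrix.mulVec_mulVec, Matrix.dotProduct_mulVec, ← Matrix.star_mulVec, hv]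
      simp
    have ha : (0:ℂ) ≤ star v ⬝ᵥ ((Pᴴ * P) *ᵥ v) :=
      (Matrix.posSemidef_conjTranspose_mul_self P).dotProduct_mulVec_nonneg v
    have hb : (0:ℂ) ≤ star v ⬝ᵥ ((1 - Uᴴ * U) *ᵥ v) := hU.dotProduct_mulVec_nonneg v
    have hsum : star v ⬝ᵥ ((Pᴴ * P) *ᵥ v) + star v ⬝ᵥ ((1 - Uᴴ * U) *ᵥ v) = 0 := by
      rw [← dotProduct_add, ← Matrix.add_mulVec, ← hkey, h0]
    have ha0 : star v ⬝ᵥ ((Pᴴ * P) *ᵥ v) = 0 := by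
      refine le_antisymm ?_ ha
      have := eq_neg_of_add_eq_zero_left hsum
      rw [this]
      exact neg_nonpos.mpr hb
    have hPv : P *ᵥ v = 0 := by
      rw [← Matrix.mulVec_mulVec, Matrix.dotProduct_mulVec, ← Matrix.star_mulVec] at ha0
      exact dotProduct_star_self_eq_zero.mp ha0
    -- build the kernel vector for T
    set w : (Fin L ⊕ Fin L) → ℂ := Sum.elim (U *ᵥ v) v with hwdef
    have hTw : T *ᵥ w = 0 := by
      rw [hTdef, Matrix.fromBlocks_mulVec]
      have h1 : (w ∘ Sum.inl) = U *ᵥ v := rfl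
      have h2 : (w ∘ Sum.inr) = v := rfl
      rw [h1, h2]
      have e1 : A *ᵥ (U *ᵥ v) + B *ᵥ v = P *ᵥ v := by
        rw [hPdef, Matrix.add_mulVec, Matrix.mulVec_mulVec]
      have e2 : C *ᵥ (U *ᵥ v) + D *ᵥ v = M *ᵥ v := by
        rw [hMdef, Matrix.add_mulVec, Matrix.mulVec_mulVec]
      rw [e1, e2, hPv, hv]
      ext i; cases i <;> simp
    have hinj : Function.Injective T.mulVec :=
      Matrix.mulVec_injective_iff_isUnit.mpr ((Matrix.isUnit_iff_isUnit_det T).mpr hdetT)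
    have hw0 : w = 0 := by
      apply hinj
      rw [hTw, Matrix.mulVec_zero]
    exact hv0 (funext fun i => congrFun hw0 (Sum.inr i))
  -- now the rank computation
  have hdetMH : IsUnit Mᴴ.det := by rwa [Matrix.det_conjTranspose, isUnit_star]
  have hMinv : M * M⁻¹ = 1 := Matrix.mul_nonsing_inv M hdetM
  have hMHinv : Mᴴ⁻¹ * Mᴴ = 1 := Matrix.nonsing_inv_mul Mᴴ hdetMH
  have hmain : 1 - (P * M⁻¹)ᴴ * (P * M⁻¹) = M⁻¹ᴴ * (1 - Uᴴ * U) * M⁻¹ := by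
    rw [Matrix.conjTranspose_mul, Matrix.conjTranspose_nonsing_inv]
    have : Mᴴ⁻¹ * Pᴴ * (P * M⁻¹) = Mᴴ⁻¹ * (Pᴴ * P) * M⁻¹ := by
      noncomm_ring
    have hkey' : Pᴴ * P = Mᴴ * M - (1 - Uᴴ * U) := by
      rw [hkey]; noncomm_ring
    rw [this, hkey']
    have expand : Mᴴ⁻¹ * (Mᴴ * M - (1 - Uᴴ * U)) * M⁻¹
        = (Mᴴ⁻¹ * Mᴴ) * (M * M⁻¹) - Mᴴ⁻¹ * (1 - Uᴴ * U) * M⁻¹ := by noncomm_ring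
    rw [expand, hMinv, hMHinv, Matrix.one_mul]
    noncomm_ring
  rw [hmain]
  have hdetMi : IsUnit M⁻¹.det := Matrix.isUnit_nonsing_inv_det M hdetM
  have hdetMiH : IsUnit M⁻¹ᴴ.det := by rwa [Matrix.det_conjTranspose, isUnit_star]
  rw [Matrix.rank_mul_eq_left_of_isUnit_det _ _ hdetMi,
    Matrix.rank_mul_eq_right_of_isUnit_det _ _ hdetMiH, hrank]
end
end

section
/- For T = ((A,B),(C,D)) ∈ U(L,L,ℝ), meaning T ∈ U(L,L) with additionally C = conj(B) and D = conj(A), and for a symmetric matrix U with U*U ≤ 1, the Möbius transform T·U = (AU+B)(conj(B)U + conj(A))^{-1} is again symmetric. -/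
open Matrix
open scoped ComplexOrder

noncomputable section

/-- For `T = ((A,B),(conj B, conj A)) ∈ U(L,L,ℝ)` and a symmetric `U` with `U*U ≤ 1`,
the Möbius transform `(AU+B)(conj(B)U + conj(A))⁻¹` is again symmetric. -/
theorem stmt10 (L : ℕ) (A B U : Matrix (Fin L) (Fin L) ℂ)
    (hT : (Matrix.fromBlocks A B (B.map (starRingEnd ℂ)) (A.map (starRingEnd ℂ)))ᴴ * Gmat L *
        Matrix.fromBlocks A B (B.map (starRingEnd ℂ)) (A.map (starRingEnd ℂ)) = Gmat L)
    (hsym : Uᵀ = U)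
    (hU : (1 - Uᴴ * U).PosSemidef) :
    ((A * U + B) * (B.map (starRingEnd ℂ) * U + A.map (starRingEnd ℂ))⁻¹)ᵀ
      = (A * U + B) * (B.map (starRingEnd ℂ) * U + A.map (starRingEnd ℂ))⁻¹ := by
  set Ac := A.map (starRingEnd ℂ) with hAcdef
  set Bc := B.map (starRingEnd ℂ) with hBcdef
  -- basic facts about the conjugated matrices
  have hAcH : Acᴴ = Aᵀ := by
    ext i j; simp [hAcdef, conjTranspose_apply, Matrix.map_apply]
  have hBcH : Bcᴴ = Bᵀ := by
    ext i j; simp [hBcdef, conjTranspose_apply, Matrix.map_apply]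
  have hAcT : Acᵀ = Aᴴ := by
    ext i j; simp [hAcdef, conjTranspose_apply, Matrix.map_apply]
  have hBcT : Bcᵀ = Bᴴ := by
    ext i j; simp [hBcdef, conjTranspose_apply, Matrix.map_apply]
  -- T is invertible
  have hGG : Gmat L * Gmat L = 1 := by
    rw [Gmat, fromBlocks_multiply]
    simp [fromBlocks_one]
  have hTunit : IsUnit (Matrix.fromBlocks A B Bc Ac).det := by
    apply Matrix.isUnit_det_of_left_inverse
      (B := Gmat L * (Matrix.fromBlocks A B Bc Ac)ᴴ * Gmat L)
    calc Gmat L * (Matrix.fromBlocks A B Bc Ac)ᴴ * Gmat L * Matrix.fromBlocks A B Bc Ac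
        = Gmat L * ((Matrix.fromBlocks A B Bc Ac)ᴴ * Gmat L * Matrix.fromBlocks A B Bc Ac) := by
          noncomm_ring
      _ = Gmat L * Gmat L := by rw [hT]
      _ = 1 := hGG
  -- block equations
  rw [Gmat, fromBlocks_conjTranspose, fromBlocks_multiply, fromBlocks_multiply] at hT
  simp only [Matrix.mul_one, Matrix.mul_zero, Matrix.one_mul, Matrix.zero_mul, add_zero, zero_add,
    Matrix.mul_neg, Matrix.neg_mul, fromBlocks_inj] at hT
  obtain ⟨e1, e2, e3, e4⟩ := hT
  rw [hBcH] at e1 e2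
  rw [hAcH] at e3 e4
  have h1 : Bᵀ * Bc = Aᴴ * A - 1 := by
    have := e1; rw [add_neg_eq_iff_eq_add] at this; rw [this]; abel
  have h2 : Bᵀ * Ac = Aᴴ * B := by
    have := e2; rw [add_neg_eq_iff_eq_add] at this; rw [this]; abel
  have h3 : Aᵀ * Bc = Bᴴ * A := by
    have := e3; rw [add_neg_eq_iff_eq_add] at this; rw [this]; abel
  have h4 : Aᵀ * Ac = Bᴴ * B + 1 := by
    have := e4; rw [add_neg_eq_iff_eq_add] at this; rw [this]; abel
  -- the key symmetry identity
  have key : (A * U + B)ᵀ * (Bc * U + Ac) = (Bc * U + Ac)ᵀ * (A * U + B) := by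
    calc (A * U + B)ᵀ * (Bc * U + Ac)
        = U * (Aᵀ * Bc) * U + U * (Aᵀ * Ac) + (Bᵀ * Bc) * U + Bᵀ * Ac := by
          rw [transpose_add, transpose_mul, hsym]; noncomm_ring
      _ = U * (Bᴴ * A) * U + U * (Bᴴ * B + 1) + (Aᴴ * A - 1) * U + Aᴴ * B := by
          rw [h1, h2, h3, h4]
      _ = (U * Bᴴ + Aᴴ) * (A * U + B) := by noncomm_ring
      _ = (Bc * U + Ac)ᵀ * (A * U + B) := by
          rw [transpose_add, transpose_mul, hsym, hBcT, hAcT]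
  -- M^H M = N^H N + (1 - U^H U)
  have hMM : (Bc * U + Ac)ᴴ * (Bc * U + Ac)
      = (A * U + B)ᴴ * (A * U + B) + (1 - Uᴴ * U) := by
    calc (Bc * U + Ac)ᴴ * (Bc * U + Ac)
        = Uᴴ * (Bᵀ * Bc) * U + Uᴴ * (Bᵀ * Ac) + (Aᵀ * Bc) * U + Aᵀ * Ac := by
          rw [conjTranspose_add, conjTranspose_mul, hBcH, hAcH]; noncomm_ring
      _ = Uᴴ * (Aᴴ * A - 1) * U + Uᴴ * (Aᴴ * B) + (Bᴴ * A) * U + (Bᴴ * B + 1) := by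
          rw [h1, h2, h3, h4]
      _ = (Uᴴ * Aᴴ + Bᴴ) * (A * U + B) + (1 - Uᴴ * U) := by noncomm_ring
      _ = (A * U + B)ᴴ * (A * U + B) + (1 - Uᴴ * U) := by
          rw [conjTranspose_add, conjTranspose_mul]
  -- M is invertible
  have hMdet : IsUnit (Bc * U + Ac).det := by
    rw [isUnit_iff_ne_zero]
    intro h0
    obtain ⟨v, hv, hMv⟩ := (Matrix.exists_mulVec_eq_zero_iff).mpr h0
    have hps1 : ((A * U + B)ᴴ * (A * U + B)).PosSemidef :=
      posSemidef_conjTranspose_mul_self _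
    have hq : star v ⬝ᵥ ((A * U + B)ᴴ * (A * U + B)) *ᵥ v
        + star v ⬝ᵥ (1 - Uᴴ * U) *ᵥ v = 0 := by
      have hz : ((Bc * U + Ac)ᴴ * (Bc * U + Ac)) *ᵥ v = 0 := by
        rw [← mulVec_mulVec, hMv, mulVec_zero]
      calc star v ⬝ᵥ ((A * U + B)ᴴ * (A * U + B)) *ᵥ v + star v ⬝ᵥ (1 - Uᴴ * U) *ᵥ v
          = star v ⬝ᵥ ((A * U + B)ᴴ * (A * U + B) + (1 - Uᴴ * U)) *ᵥ v := by
            rw [add_mulVec, dotProduct_add]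
        _ = star v ⬝ᵥ ((Bc * U + Ac)ᴴ * (Bc * U + Ac)) *ᵥ v := by rw [← hMM]
        _ = 0 := by rw [hz, dotProduct_zero]
    have p1 : (0 : ℂ) ≤ star v ⬝ᵥ ((A * U + B)ᴴ * (A * U + B)) *ᵥ v := hps1.dotProduct_mulVec_nonneg v
    have p2 : (0 : ℂ) ≤ star v ⬝ᵥ (1 - Uᴴ * U) *ᵥ v := hU.dotProduct_mulVec_nonneg v
    have ha : star v ⬝ᵥ ((A * U + B)ᴴ * (A * U + B)) *ᵥ v = 0 := by
      have hle : star v ⬝ᵥ ((A * U + B)ᴴ * (A * U + B)) *ᵥ v ≤ 0 := by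
        have : star v ⬝ᵥ ((A * U + B)ᴴ * (A * U + B)) *ᵥ v
            = - (star v ⬝ᵥ (1 - Uᴴ * U) *ᵥ v) := by linear_combination hq
        rw [this]
        exact neg_nonpos_of_nonneg p2
      exact le_antisymm hle p1
    have hNv : (A * U + B) *ᵥ v = 0 := by
      rw [← mulVec_mulVec, dotProduct_mulVec, vecMul_conjTranspose, star_star,
        dotProduct_star_self_eq_zero] at ha
      exact ha
    -- build the full vector and use invertibility of T
    set w : Fin L ⊕ Fin L → ℂ := Sum.elim (U *ᵥ v) v with hwdef
    have hTw : (Matrix.fromBlocks A B Bc Ac) *ᵥ w = 0 := by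
      rw [fromBlocks_mulVec]
      have hwl : w ∘ Sum.inl = U *ᵥ v := Sum.elim_comp_inl _ _
      have hwr : w ∘ Sum.inr = v := Sum.elim_comp_inr _ _
      rw [hwl, hwr]
      have e1' : A *ᵥ (U *ᵥ v) + B *ᵥ v = 0 := by
        rw [mulVec_mulVec, ← add_mulVec, hNv]
      have e2' : Bc *ᵥ (U *ᵥ v) + Ac *ᵥ v = 0 := by
        rw [mulVec_mulVec, ← add_mulVec, hMv]
      rw [e1', e2']
      ext i; cases i <;> rfl
    have hw0 : w = 0 := by
      calc w = 1 *ᵥ w := (one_mulVec w).symm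
        _ = ((Matrix.fromBlocks A B Bc Ac)⁻¹ * Matrix.fromBlocks A B Bc Ac) *ᵥ w := by
            rw [Matrix.nonsing_inv_mul _ hTunit]
        _ = (Matrix.fromBlocks A B Bc Ac)⁻¹ *ᵥ ((Matrix.fromBlocks A B Bc Ac) *ᵥ w) :=
            (mulVec_mulVec _ _ _).symm
        _ = 0 := by rw [hTw, mulVec_zero]
    apply hv
    ext i
    have := congrFun hw0 (Sum.inr i)
    simpa [hwdef] using this
  -- conclude
  have hMt : IsUnit ((Bc * U + Ac)ᵀ).det := by rwa [Matrix.det_transpose]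
  rw [transpose_mul, transpose_nonsing_inv]
  have h5 : (Bc * U + Ac)ᵀ * ((A * U + B) * (Bc * U + Ac)⁻¹) = (A * U + B)ᵀ := by
    rw [← mul_assoc, ← key, mul_assoc, Matrix.mul_nonsing_inv _ hMdet, mul_one]
  rw [← h5, ← mul_assoc, Matrix.nonsing_inv_mul _ hMt, one_mul]
end
end

section
/- Let Φ and Ψ be 2L×L complex matrices of rank L representing Lagrangian planes, and define the Wronskian W(Φ,Ψ) = Φ*JΨ. Then dim(range(Φ) ∩ range(Ψ)) = dim ker W(Φ,Ψ). In particular, the two planes intersect nontrivially if and only if det W(Φ,Ψ) = 0, and W(Φ,Ψ) = 0 if and only if the planes coincide. -/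
open Matrix

noncomputable section

lemma Jmat_sq (L : ℕ) : Jmat L * Jmat L = -1 := by
  ext i j
  rcases i with i | i <;> rcases j with j | j <;>
    simp [Jmat, Matrix.fromBlocks_multiply, Matrix.one_apply]

lemma Jmat_isUnit (L : ℕ) : IsUnit (Jmat L) := by
  apply (Matrix.isUnit_iff_isUnit_det _).mpr (Matrix.isUnit_det_of_left_inverse (B := -(Jmat L)) ?_)
  rw [Matrix.neg_mul, Jmat_sq, neg_neg]

lemma Jmat_inj (L : ℕ) : Function.Injective (Jmat L).mulVecLin :=
  Matrix.mulVec_injective_iff_isUnit.mpr (Jmat_isUnit L)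

lemma finrank_map_inj {n m : Type*} [Fintype n] [Fintype m]
    (f : (n → ℂ) →ₗ[ℂ] (m → ℂ)) (hf : Function.Injective f) (p : Submodule ℂ (n → ℂ)) :
    Module.finrank ℂ (Submodule.map f p) = Module.finrank ℂ p :=
  (LinearEquiv.finrank_eq (Submodule.equivMapOfInjective f hf p)).symm

lemma inj_of_rank {L : ℕ} {A : Matrix (Fin L ⊕ Fin L) (Fin L) ℂ}
    (h : A.rank = L) : Function.Injective A.mulVecLin := by
  rw [← LinearMap.ker_eq_bot, ← Submodule.finrank_eq_zero (R := ℂ)]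
  have h2 := LinearMap.finrank_range_add_finrank_ker A.mulVecLin
  have hdom : Module.finrank ℂ (Fin L → ℂ) = L := by simp
  rw [hdom] at h2
  have hr : Module.finrank ℂ (LinearMap.range A.mulVecLin) = L := h
  omega

open scoped ComplexOrder in
lemma ker_conjT {L : ℕ} {A : Matrix (Fin L ⊕ Fin L) (Fin L) ℂ}
    (hr : A.rank = L) (hA : Aᴴ * Jmat L * A = 0) :
    LinearMap.ker (Aᴴ).mulVecLin
      = Submodule.map (Jmat L).mulVecLin (LinearMap.range A.mulVecLin) := by
  symm
  apply Submodule.eq_of_le_of_finrank_le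
  · rintro _ ⟨_, ⟨x, rfl⟩, rfl⟩
    simp only [LinearMap.mem_ker, Matrix.mulVecLin_apply, Matrix.mulVec_mulVec]
    rw [Matrix.mul_assoc] at hA
    rw [hA, Matrix.zero_mulVec]
  · have h1 : Module.finrank ℂ (LinearMap.ker (Aᴴ).mulVecLin) = L := by
      have h2 := LinearMap.finrank_range_add_finrank_ker (Aᴴ).mulVecLin
      have hdom : Module.finrank ℂ (Fin L ⊕ Fin L → ℂ) = L + L := by simp
      rw [hdom] at h2
      have hr' : Module.finrank ℂ (LinearMap.range (Aᴴ).mulVecLin) = L := by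
        have h3 := A.rank_conjTranspose
        rw [hr] at h3
        exact h3
      omega
    have h2 : Module.finrank ℂ
        (Submodule.map (Jmat L).mulVecLin (LinearMap.range A.mulVecLin)) = L := by
      rw [finrank_map_inj _ (Jmat_inj L)]
      exact hr
    omega

/-- For Lagrangian frames `Φ, Ψ` the dimension of the intersection of their column spans
equals the dimension of the kernel of the Wronskian `W(Φ,Ψ) = Φ* J Ψ`; the planes
intersect nontrivially iff `det W = 0`, and `W = 0` iff the planes coincide. -/
theorem stmt12 (L : ℕ) (Φ Ψ : Matrix (Fin L ⊕ Fin L) (Fin L) ℂ)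
    (hΦr : Φ.rank = L) (hΦ : Φᴴ * Jmat L * Φ = 0)
    (hΨr : Ψ.rank = L) (hΨ : Ψᴴ * Jmat L * Ψ = 0) :
    Module.finrank ℂ ↥(LinearMap.range Φ.mulVecLin ⊓ LinearMap.range Ψ.mulVecLin)
      = Module.finrank ℂ ↥(LinearMap.ker (Φᴴ * Jmat L * Ψ).mulVecLin)
    ∧ (LinearMap.range Φ.mulVecLin ⊓ LinearMap.range Ψ.mulVecLin ≠ ⊥
        ↔ (Φᴴ * Jmat L * Ψ).det = 0)
    ∧ (Φᴴ * Jmat L * Ψ = 0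
        ↔ LinearMap.range Φ.mulVecLin = LinearMap.range Ψ.mulVecLin) := by
  have hΨinj := inj_of_rank hΨr
  have hker : LinearMap.ker (Φᴴ * Jmat L * Ψ).mulVecLin
      = Submodule.comap Ψ.mulVecLin (LinearMap.range Φ.mulVecLin) := by
    ext c
    simp only [LinearMap.mem_ker, Submodule.mem_comap, Matrix.mulVecLin_apply]
    have hW : (Φᴴ * Jmat L * Ψ) *ᵥ c = Φᴴ *ᵥ ((Jmat L) *ᵥ (Ψ *ᵥ c)) := by
      rw [Matrix.mulVec_mulVec, Matrix.mulVec_mulVec, Matrix.mul_assoc]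
    rw [hW]
    constructor
    · intro h
      have hmem : (Jmat L).mulVecLin (Ψ *ᵥ c) ∈ LinearMap.ker (Φᴴ).mulVecLin := h
      rw [ker_conjT hΦr hΦ] at hmem
      obtain ⟨v, hv, hJv⟩ := hmem
      have hveq : v = Ψ *ᵥ c := Jmat_inj L hJv
      rwa [hveq] at hv
    · rintro ⟨x, hx⟩
      simp only [Matrix.mulVecLin_apply] at hx
      rw [← hx]
      show Φᴴ *ᵥ ((Jmat L) *ᵥ (Φ *ᵥ x)) = 0
      rw [Matrix.mulVec_mulVec, Matrix.mulVec_mulVec, hΦ, Matrix.zero_mulVec]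
  have hmapcomap : Submodule.map Ψ.mulVecLin
      (Submodule.comap Ψ.mulVecLin (LinearMap.range Φ.mulVecLin))
      = LinearMap.range Φ.mulVecLin ⊓ LinearMap.range Ψ.mulVecLin := by
    rw [Submodule.map_comap_eq, inf_comm]
  have hdim : Module.finrank ℂ
      ↥(LinearMap.range Φ.mulVecLin ⊓ LinearMap.range Ψ.mulVecLin)
      = Module.finrank ℂ ↥(LinearMap.ker (Φᴴ * Jmat L * Ψ).mulVecLin) := by
    rw [hker, ← hmapcomap, finrank_map_inj _ hΨinj]
  refine ⟨hdim, ?_, ?_⟩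
  · have hdetiff : (Φᴴ * Jmat L * Ψ).det ≠ 0
        ↔ LinearMap.ker (Φᴴ * Jmat L * Ψ).mulVecLin = ⊥ := by
      rw [← isUnit_iff_ne_zero, ← Matrix.isUnit_iff_isUnit_det,
        ← Matrix.mulVec_injective_iff_isUnit]
      constructor
      · intro h
        exact LinearMap.ker_eq_bot.mpr h
      · intro h
        exact LinearMap.ker_eq_bot.mp h
    have h1 : LinearMap.ker (Φᴴ * Jmat L * Ψ).mulVecLin = ⊥
        ↔ LinearMap.range Φ.mulVecLin ⊓ LinearMap.range Ψ.mulVecLin = ⊥ := by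
      constructor
      · intro h
        exact Submodule.finrank_eq_zero.mp (by rw [hdim, h]; simp)
      · intro h
        exact Submodule.finrank_eq_zero.mp (by rw [← hdim, h]; simp)
    rw [ne_eq, ← h1, ← hdetiff, not_not]
  · constructor
    · intro h
      have hkt : LinearMap.ker (Φᴴ * Jmat L * Ψ).mulVecLin = ⊤ := by
        rw [h]; simp
      rw [hker] at hkt
      have hle : LinearMap.range Ψ.mulVecLin ≤ LinearMap.range Φ.mulVecLin :=
        LinearMap.range_le_iff_comap.mpr hkt
      symm
      apply Submodule.eq_of_le_of_finrank_le hle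
      show Φ.rank ≤ Ψ.rank
      rw [hΦr, hΨr]
    · intro h
      have hkt : Submodule.comap Ψ.mulVecLin (LinearMap.range Φ.mulVecLin) = ⊤ :=
        LinearMap.range_le_iff_comap.mp (le_of_eq h.symm)
      rw [← hker] at hkt
      have hz : (Φᴴ * Jmat L * Ψ).mulVecLin = 0 := LinearMap.ker_eq_top.mp hkt
      ext i j
      have hc := congrArg (fun f => f (Pi.single j 1) i) hz
      simpa only [Matrix.mulVecLin_apply, Matrix.mulVec_single_one, LinearMap.zero_apply, Pi.zero_apply, Matrix.col_apply, Matrix.zero_apply] using hc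
end
end

section
/- Let V₁, V₂ be selfadjoint and T₁, T₂ positive definite L×L matrices, with associated transfer matrices T_n^E = ((E·1 - V_n)T_n^{-1}, -T_n; T_n^{-1}, 0), n = 1,2, at E ∈ ℝ. Then the 2L×2L matrix (T₂^E)* diag((T₁T₁*)^{-1}, 0) T₂^E + diag((T₂T₂*)^{-1}, 0) is positive definite. -/
open Matrix
open scoped ComplexOrder

noncomputable section

def transferM (L : ℕ) (E : ℝ) (V T : Matrix (Fin L) (Fin L) ℂ) :
    Matrix (Fin L ⊕ Fin L) (Fin L ⊕ Fin L) ℂ :=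
  Matrix.fromBlocks (((E : ℂ) • 1 - V) * T⁻¹) (-T) T⁻¹ 0

lemma quadForm_conj {n m : Type*} [Fintype n] [Fintype m]
    (M : Matrix m m ℂ) (A : Matrix m n ℂ) (x : n → ℂ) :
    star x ⬝ᵥ (Aᴴ * M * A) *ᵥ x = star (A *ᵥ x) ⬝ᵥ M *ᵥ (A *ᵥ x) := by
  rw [star_mulVec, ← Matrix.mulVec_mulVec, ← Matrix.mulVec_mulVec,
    Matrix.dotProduct_mulVec (star x) Aᴴ]

lemma quadForm_blocks {n m : Type*} [Fintype n] [Fintype m]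
    (P : Matrix n n ℂ) (a : n → ℂ) (b : m → ℂ) :
    star (Sum.elim a b) ⬝ᵥ (Matrix.fromBlocks P 0 0 0) *ᵥ (Sum.elim a b)
      = star a ⬝ᵥ P *ᵥ a := by
  simp [Function.star_sumElim, Matrix.fromBlocks_mulVec,
    sumElim_dotProduct_sumElim]

lemma mul_conjTranspose_posDef {n : Type*} [Fintype n] [DecidableEq n]
    {T : Matrix n n ℂ} (hT : T.PosDef) : (T * Tᴴ).PosDef := by
  refine Matrix.posDef_iff_dotProduct_mulVec.2 ⟨Matrix.isHermitian_mul_conjTranspose_self T, fun x hx => ?_⟩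
  have hform : star x ⬝ᵥ (T * Tᴴ) *ᵥ x = star (Tᴴ *ᵥ x) ⬝ᵥ (Tᴴ *ᵥ x) := by
    rw [star_mulVec, ← Matrix.mulVec_mulVec, Matrix.dotProduct_mulVec (star x) T,
      Matrix.conjTranspose_conjTranspose]
  rw [hform]
  rw [Matrix.dotProduct_star_self_pos_iff]
  intro h
  apply hx
  rw [hT.isHermitian.eq] at h
  have hinj := Matrix.mulVec_injective_iff_isUnit.2 hT.isUnit
  exact hinj (h.trans (Matrix.mulVec_zero T).symm)

/-- For two transfer matrices, the sum
`(T₂^E)* diag((T₁T₁*)⁻¹,0) T₂^E + diag((T₂T₂*)⁻¹,0)` is positive definite. -/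
theorem stmt15 (L : ℕ) (E : ℝ) (V₁ V₂ T₁ T₂ : Matrix (Fin L) (Fin L) ℂ)
    (hV₁ : V₁.IsHermitian) (hV₂ : V₂.IsHermitian)
    (hT₁ : T₁.PosDef) (hT₂ : T₂.PosDef) :
    ((transferM L E V₂ T₂)ᴴ * Matrix.fromBlocks ((T₁ * T₁ᴴ)⁻¹) 0 0 0 * transferM L E V₂ T₂
      + Matrix.fromBlocks ((T₂ * T₂ᴴ)⁻¹) 0 0 0).PosDef := by
  have hP₁ : ((T₁ * T₁ᴴ)⁻¹).PosDef := (mul_conjTranspose_posDef hT₁).inv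
  have hP₂ : ((T₂ * T₂ᴴ)⁻¹).PosDef := (mul_conjTranspose_posDef hT₂).inv
  set A := transferM L E V₂ T₂ with hA
  have hM₁ : (Matrix.fromBlocks ((T₁ * T₁ᴴ)⁻¹) (0 : Matrix (Fin L) (Fin L) ℂ) 0 0).IsHermitian :=
    Matrix.IsHermitian.fromBlocks hP₁.isHermitian (by simp) (Matrix.isHermitian_zero)
  have hM₂ : (Matrix.fromBlocks ((T₂ * T₂ᴴ)⁻¹) (0 : Matrix (Fin L) (Fin L) ℂ) 0 0).IsHermitian :=
    Matrix.IsHermitian.fromBlocks hP₂.isHermitian (by simp) (Matrix.isHermitian_zero)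
  rw [Matrix.posDef_iff_dotProduct_mulVec]
  constructor
  · refine (Matrix.IsHermitian.add ?_ hM₂)
    simpa [mul_assoc] using Matrix.isHermitian_conjTranspose_mul_mul A hM₁
  · intro x hx
    set a := x ∘ Sum.inl with haa
    set b := x ∘ Sum.inr with hbb
    have hxe : x = Sum.elim a b := by
      funext i; cases i <;> rfl
    have hsplit : star x ⬝ᵥ
        (Aᴴ * Matrix.fromBlocks ((T₁ * T₁ᴴ)⁻¹) 0 0 0 * A
          + Matrix.fromBlocks ((T₂ * T₂ᴴ)⁻¹) 0 0 0) *ᵥ x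
        = star (A *ᵥ x) ⬝ᵥ (Matrix.fromBlocks ((T₁ * T₁ᴴ)⁻¹) 0 0 0) *ᵥ (A *ᵥ x)
          + star a ⬝ᵥ ((T₂ * T₂ᴴ)⁻¹) *ᵥ a := by
      rw [Matrix.add_mulVec, dotProduct_add, quadForm_conj]
      congr 1
      rw [hxe, quadForm_blocks]
    rw [hsplit]
    have hAx : A *ᵥ x = Sum.elim ((((E : ℂ) • 1 - V₂) * T₂⁻¹) *ᵥ a + (-T₂) *ᵥ b) (T₂⁻¹ *ᵥ a) := by
      rw [hxe, hA, transferM, Matrix.fromBlocks_mulVec]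
      simp
    by_cases ha : a = 0
    · -- then b ≠ 0 and A x = (-(T₂ b), 0)
      have hb : b ≠ 0 := by
        intro hb0
        apply hx
        rw [hxe, ha, hb0]
        funext i; cases i <;> rfl
      have hAx' : A *ᵥ x = Sum.elim (-(T₂ *ᵥ b)) 0 := by
        rw [hAx, ha]
        simp [Matrix.neg_mulVec]
      have hy : -(T₂ *ᵥ b) ≠ 0 := by
        intro h
        apply hb
        have hinj := Matrix.mulVec_injective_iff_isUnit.2 hT₂.isUnit
        apply hinj
        rw [Matrix.mulVec_zero, ← neg_eq_zero]
        exact h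
      have h1 : 0 < star (A *ᵥ x) ⬝ᵥ (Matrix.fromBlocks ((T₁ * T₁ᴴ)⁻¹) 0 0 0) *ᵥ (A *ᵥ x) := by
        rw [hAx', quadForm_blocks]
        exact hP₁.dotProduct_mulVec_pos hy
      have h2 : (0 : ℂ) ≤ star a ⬝ᵥ ((T₂ * T₂ᴴ)⁻¹) *ᵥ a := hP₂.posSemidef.dotProduct_mulVec_nonneg a
      exact add_pos_of_pos_of_nonneg h1 h2
    · have h2 : 0 < star a ⬝ᵥ ((T₂ * T₂ᴴ)⁻¹) *ᵥ a := hP₂.dotProduct_mulVec_pos ha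
      have h1 : (0 : ℂ) ≤ star (A *ᵥ x) ⬝ᵥ (Matrix.fromBlocks ((T₁ * T₁ᴴ)⁻¹) 0 0 0) *ᵥ (A *ᵥ x) := by
        rw [hAx, quadForm_blocks]
        exact hP₁.posSemidef.dotProduct_mulVec_nonneg _
      exact add_pos_of_nonneg_of_pos h1 h2
end
end

section
/- Let Φ^E = M T^E Φ where M is a complex symplectic 2L×2L matrix, T^E the transfer matrix built from selfadjoint V and positive definite T, and Φ a 2L×L rank-L matrix representing a Lagrangian plane with invertible upper block (1 0)Φ. Then (Φ^E)* J (∂_E Φ^E) = Φ* diag(T^{-2}, 0) Φ, and this matrix is positive definite. -/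
open Matrix
open scoped ComplexOrder

noncomputable section

lemma aux_posdef_conj {n : Type*} [Fintype n] [DecidableEq n]
    {P a : Matrix n n ℂ} (hP : P.PosDef) (ha : IsUnit a) :
    (aᴴ * P * a).PosDef := by
  have hinj : Function.Injective a.mulVec := mulVec_injective_iff_isUnit.2 ha
  exact hP.conjTranspose_mul_mul_same hinj

/-- For `Φ^E = M T^E Φ` with `M` symplectic, `T^E` a transfer matrix and `Φ` a Lagrangian
frame with invertible upper block, `(Φ^E)* J (∂_E Φ^E) = Φ* diag(T⁻², 0) Φ`, and this
matrix is positive definite. -/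
theorem stmt16 (L : ℕ) (E : ℝ) (M : Matrix (Fin L ⊕ Fin L) (Fin L ⊕ Fin L) ℂ)
    (hM : Mᴴ * Jmat L * M = Jmat L)
    (V T : Matrix (Fin L) (Fin L) ℂ) (hV : V.IsHermitian) (hT : T.PosDef)
    (Φ : Matrix (Fin L ⊕ Fin L) (Fin L) ℂ)
    (hr : Φ.rank = L) (hLag : Φᴴ * Jmat L * Φ = 0)
    (ha : IsUnit (Φ.submatrix Sum.inl (id : Fin L → Fin L))) :
    (M * transferM L E V T * Φ)ᴴ * Jmat L * (M * Matrix.fromBlocks T⁻¹ 0 0 0 * Φ)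
      = Φᴴ * (Matrix.fromBlocks (T⁻¹ * T⁻¹) 0 0 0 : Matrix (Fin L ⊕ Fin L) (Fin L ⊕ Fin L) ℂ) * Φ
    ∧ (Φᴴ * (Matrix.fromBlocks (T⁻¹ * T⁻¹) 0 0 0 : Matrix (Fin L ⊕ Fin L) (Fin L ⊕ Fin L) ℂ) * Φ).PosDef := by
  have hTinv : (T⁻¹)ᴴ = T⁻¹ := by
    rw [conjTranspose_nonsing_inv, hT.1.eq]
  have key : (transferM L E V T)ᴴ * Jmat L * Matrix.fromBlocks T⁻¹ 0 0 0
      = Matrix.fromBlocks (T⁻¹ * T⁻¹) 0 0 0 := by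
    simp [transferM, Jmat, fromBlocks_conjTranspose, fromBlocks_multiply, hTinv,
      Matrix.mul_one, Matrix.mul_zero, Matrix.zero_mul]
  have heq : (M * transferM L E V T * Φ)ᴴ * Jmat L * (M * Matrix.fromBlocks T⁻¹ 0 0 0 * Φ)
      = Φᴴ * (Matrix.fromBlocks (T⁻¹ * T⁻¹) 0 0 0 : Matrix (Fin L ⊕ Fin L) (Fin L ⊕ Fin L) ℂ) * Φ := by
    calc (M * transferM L E V T * Φ)ᴴ * Jmat L * (M * Matrix.fromBlocks T⁻¹ 0 0 0 * Φ)
        = Φᴴ * ((transferM L E V T)ᴴ * (Mᴴ * Jmat L * M) * Matrix.fromBlocks T⁻¹ 0 0 0 * Φ) := by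
          simp only [conjTranspose_mul, Matrix.mul_assoc]
      _ = Φᴴ * (Matrix.fromBlocks (T⁻¹ * T⁻¹) 0 0 0 : Matrix (Fin L ⊕ Fin L) (Fin L ⊕ Fin L) ℂ) * Φ := by
          rw [hM]
          simp only [← Matrix.mul_assoc, key]
  refine ⟨heq, ?_⟩
  set a := Φ.submatrix Sum.inl (id : Fin L → Fin L) with ha_def
  have hform : Φᴴ * (Matrix.fromBlocks (T⁻¹ * T⁻¹) 0 0 0 : Matrix (Fin L ⊕ Fin L) (Fin L ⊕ Fin L) ℂ) * Φ = aᴴ * (T⁻¹ * T⁻¹) * a := by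
    ext i j
    simp [Matrix.mul_apply, Fintype.sum_sum_type, ha_def, Finset.mul_sum, Finset.sum_mul,
      mul_assoc]
  rw [hform]
  have hTu : IsUnit (T⁻¹) := isUnit_nonsing_inv_iff.2 hT.isUnit
  have h2 : (T⁻¹ * T⁻¹).PosDef := by
    have := aux_posdef_conj Matrix.PosDef.one (P := (1 : Matrix (Fin L) (Fin L) ℂ)) hTu
    simpa [hTinv] using this
  have h3 := aux_posdef_conj h2 ha
  exact h3
end
end

section
/- Let U^E_N be a differentiable family of unitary L×L matrices (E real) of the form U^E_N = φ_-^E (φ_+^E)^{-1} with φ_±^E = (1, ±i·1)Φ^E_N for a Lagrangian plane Φ^E_N. Then (1/i)(U^E_N)* ∂_E U^E_N = 2 ((φ_+^E)^{-1})* [Φ^E_N* J ∂_E Φ^E_N] (φ_+^E)^{-1}; in particular, if Φ^E_N* J ∂_E Φ^E_N is positive definite, then (1/i)(U^E_N)* ∂_E U^E_N is positive definite, so all eigenphases of U^E_N are strictly increasing in E. -/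
open Matrix
open scoped ComplexOrder

noncomputable section

lemma phiJ {L : ℕ} (a b c d : Matrix (Fin L) (Fin L) ℂ) :
    (Matrix.fromRows a b)ᴴ * Jmat L * Matrix.fromRows c d = bᴴ * c - aᴴ * d := by
  rw [Jmat, Matrix.conjTranspose_fromRows_eq_fromCols_conjTranspose,
    Matrix.fromCols_mul_fromBlocks, Matrix.fromCols_mul_fromRows]
  simp [sub_eq_add_neg, add_comm]

lemma expand17 {L : ℕ} (a b c d : Matrix (Fin L) (Fin L) ℂ) :
    (a - Complex.I • b)ᴴ * (c - Complex.I • d) - (a + Complex.I • b)ᴴ * (c + Complex.I • d)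
      = (2 * Complex.I) • (bᴴ * c - aᴴ * d) := by
  ext i j
  simp only [Matrix.mul_apply, Matrix.sub_apply, Matrix.add_apply, Matrix.smul_apply,
    Matrix.conjTranspose_apply, star_sub, star_add, star_smul, Complex.star_def,
    Complex.conj_I, _root_.map_mul, smul_eq_mul, Finset.mul_sum, ← Finset.sum_sub_distrib]
  apply Finset.sum_congr rfl
  intros
  ring

lemma expandGram {L : ℕ} (a b : Matrix (Fin L) (Fin L) ℂ) :
    (a + Complex.I • b)ᴴ * (a + Complex.I • b)
      = aᴴ * a + bᴴ * b + Complex.I • (aᴴ * b - bᴴ * a) := by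
  ext i j
  simp only [Matrix.mul_apply, Matrix.sub_apply, Matrix.add_apply, Matrix.smul_apply,
    Matrix.conjTranspose_apply, star_add, star_smul, Complex.star_def,
    Complex.conj_I, _root_.map_mul, smul_eq_mul, Finset.mul_sum,
    ← Finset.sum_add_distrib, ← Finset.sum_sub_distrib]
  apply Finset.sum_congr rfl
  intros
  ring_nf
  rw [Complex.I_sq]
  ring

/-- With `φ± = a ± i b` for a Lagrangian frame `Φ = (a; b)` with derivative `∂Φ = (da; db)`
and `U = φ₋ φ₊⁻¹`, one has `(1/i) U* ∂U = 2 (φ₊⁻¹)* [Φ* J ∂Φ] φ₊⁻¹`; in particular if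
`Φ* J ∂Φ` is positive definite then so is `(1/i) U* ∂U`. -/
theorem stmt17 (L : ℕ) (a b da db : Matrix (Fin L) (Fin L) ℂ)
    (hr : (Matrix.fromRows a b).rank = L)
    (hLag : (Matrix.fromRows a b)ᴴ * Jmat L * Matrix.fromRows a b = 0) :
    (Complex.I)⁻¹ •
        (((a - Complex.I • b) * (a + Complex.I • b)⁻¹)ᴴ *
          ((da - Complex.I • db) * (a + Complex.I • b)⁻¹
            - (a - Complex.I • b) * (a + Complex.I • b)⁻¹
              * (da + Complex.I • db) * (a + Complex.I • b)⁻¹))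
      = (2 : ℂ) • (((a + Complex.I • b)⁻¹)ᴴ *
          ((Matrix.fromRows a b)ᴴ * Jmat L * Matrix.fromRows da db) *
          (a + Complex.I • b)⁻¹)
    ∧ (((Matrix.fromRows a b)ᴴ * Jmat L * Matrix.fromRows da db).PosDef →
        ((Complex.I)⁻¹ •
          (((a - Complex.I • b) * (a + Complex.I • b)⁻¹)ᴴ *
            ((da - Complex.I • db) * (a + Complex.I • b)⁻¹
              - (a - Complex.I • b) * (a + Complex.I • b)⁻¹
                * (da + Complex.I • db) * (a + Complex.I • b)⁻¹))).PosDef) := by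
  classical
  set p := a + Complex.I • b with hpdef
  set m := a - Complex.I • b with hmdef
  have h1 : bᴴ * a - aᴴ * b = 0 := by
    have := hLag; rwa [phiJ] at this
  have hmp : mᴴ * m = pᴴ * p := by
    have := expand17 a b a b
    rw [h1, smul_zero, sub_eq_zero] at this
    exact this
  have hGram : pᴴ * p = (Matrix.fromRows a b)ᴴ * Matrix.fromRows a b := by
    rw [Matrix.conjTranspose_fromRows_eq_fromCols_conjTranspose,
      Matrix.fromCols_mul_fromRows, expandGram,
      show aᴴ * b - bᴴ * a = 0 by rw [← neg_sub, h1, neg_zero], smul_zero, add_zero]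
  have hker : LinearMap.ker ((Matrix.fromRows a b)ᴴ * Matrix.fromRows a b).mulVecLin = ⊥ := by
    rw [Matrix.ker_mulVecLin_conjTranspose_mul_self]
    have h2 := LinearMap.finrank_range_add_finrank_ker (Matrix.fromRows a b).mulVecLin
    rw [show Module.finrank ℂ (LinearMap.range (Matrix.fromRows a b).mulVecLin)
        = (Matrix.fromRows a b).rank from rfl, hr] at h2
    have h3 : Module.finrank ℂ (Fin L → ℂ) = L := by simp
    rw [h3] at h2
    exact Submodule.finrank_eq_zero.mp (by omega)
  have hGU : IsUnit ((Matrix.fromRows a b)ᴴ * Matrix.fromRows a b) := by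
    rw [← Matrix.mulVec_injective_iff_isUnit]
    have := LinearMap.ker_eq_bot.mp hker
    exact this
  have hpu : IsUnit p := by
    rw [Matrix.isUnit_iff_isUnit_det p]
    have := hGU
    rw [← hGram, Matrix.isUnit_iff_isUnit_det, Matrix.det_mul] at this
    exact (IsUnit.mul_iff.mp this).2
  have hpq : p * p⁻¹ = 1 := Matrix.mul_nonsing_inv p ((Matrix.isUnit_iff_isUnit_det p).mp hpu)
  set q := p⁻¹ with hqdef
  have key : ∀ X Y : Matrix (Fin L) (Fin L) ℂ,
      (m * q)ᴴ * (X * q - m * q * Y * q) = qᴴ * ((mᴴ * X - pᴴ * Y) * q) := by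
    intro X Y
    simp only [Matrix.conjTranspose_mul, Matrix.mul_sub, Matrix.sub_mul, Matrix.mul_assoc]
    congr 1
    rw [← Matrix.mul_assoc mᴴ m, hmp, Matrix.mul_assoc pᴴ p, ← Matrix.mul_assoc p q,
      hpq, Matrix.one_mul]
  have hmain : (Complex.I)⁻¹ •
        ((m * q)ᴴ * ((da - Complex.I • db) * q - m * q * (da + Complex.I • db) * q))
      = (2 : ℂ) • (qᴴ * ((Matrix.fromRows a b)ᴴ * Jmat L * Matrix.fromRows da db) * q) := by
    rw [key, phiJ, expand17, Matrix.smul_mul, Matrix.mul_smul, smul_smul, ← Matrix.mul_assoc]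
    congr 1
    rw [mul_comm (2 : ℂ) Complex.I, ← mul_assoc, inv_mul_cancel₀ Complex.I_ne_zero, one_mul]
  refine ⟨hmain, fun hM => ?_⟩
  rw [hmain]
  have hqu : IsUnit q := by
    rw [hqdef, Matrix.isUnit_nonsing_inv_iff]
    exact hpu
  have hqinj : Function.Injective q.mulVec := Matrix.mulVec_injective_iff_isUnit.mpr hqu
  rw [Matrix.posDef_iff_dotProduct_mulVec]
  constructor
  · have hH : (qᴴ * ((Matrix.fromRows a b)ᴴ * Jmat L * Matrix.fromRows da db) * q).IsHermitian :=
      Matrix.isHermitian_conjTranspose_mul_mul q hM.1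
    unfold Matrix.IsHermitian at hH ⊢
    rw [Matrix.conjTranspose_smul, hH]
    norm_num
  · intro x hx
    have hqx : q *ᵥ x ≠ 0 := by
      intro h
      exact hx (hqinj (by simpa using h))
    have hpos := hM.dotProduct_mulVec_pos hqx
    have h2pos : (0 : ℂ) < 2 := by norm_num
    calc (0 : ℂ) < 2 * (star (q *ᵥ x) ⬝ᵥ
          (((Matrix.fromRows a b)ᴴ * Jmat L * Matrix.fromRows da db) *ᵥ (q *ᵥ x))) :=
            mul_pos h2pos hpos
      _ = star x ⬝ᵥ ((2 : ℂ) •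
            (qᴴ * ((Matrix.fromRows a b)ᴴ * Jmat L * Matrix.fromRows da db) * q)) *ᵥ x := by
          simp only [Matrix.smul_mulVec, dotProduct_smul, smul_eq_mul,
            Matrix.star_mulVec, Matrix.dotProduct_mulVec, Matrix.vecMul_vecMul]
end
end
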